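/- For all real numbers x > 0 and μ ≥ 0, ∫_0^∞ (x/√(2π r³))·exp(−(x − μ r)²/(2r)) dr = 1. -/

import Mathlib

open Real MeasureTheory Set

-- case b = 0 first, as warm-up for the machinery
lemma key0 (a : ℝ) (ha : 0 < a) :
    ∫ t in Set.Ioi (0:ℝ), a / (t * Real.sqrt t) * Real.exp (-(a^2/t)/2)
      = Real.sqrt (2*Real.pi) := by
  have himg : (fun t => a / Real.sqrt t) '' (Set.Ioi 0) = Set.Ioi 0 := by
    ext y
    constructor
    · rintro ⟨t, ht, rfl⟩
      exact div_pos ha (Real.sqrt_pos.2 ht)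
    · intro hy
      have hy0 : (0:ℝ) < y := hy
      refine ⟨a ^ 2 / y ^ 2, Set.mem_Ioi.2 (by positivity), ?_⟩
      simp only
      rw [show a ^ 2 / y ^ 2 = (a / y) ^ 2 by ring, Real.sqrt_sq (by positivity)]
      field_simp
  have hderiv : ∀ t ∈ Set.Ioi (0:ℝ), HasDerivWithinAt (fun t => a / Real.sqrt t)
      (-(a / (2 * t * Real.sqrt t))) (Set.Ioi 0) t := by
    intro t ht
    have ht' : (0:ℝ) < t := ht
    have hst : 0 < Real.sqrt t := Real.sqrt_pos.2 ht'
    have hs : HasDerivAt Real.sqrt (1 / (2 * Real.sqrt t)) t := Real.hasDerivAt_sqrt ht'.ne'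
    have h1 : HasDerivAt (fun t => a / Real.sqrt t)
        (-(a * (1 / (2 * Real.sqrt t))) / (Real.sqrt t) ^ 2) t := by
      exact ((hasDerivAt_const t a).div hs hst.ne').congr_deriv (by ring)
    have h2 : HasDerivAt (fun t => a / Real.sqrt t) (-(a / (2 * t * Real.sqrt t))) t := by
      convert h1 using 1
      rw [show (Real.sqrt t) ^ 2 = t from Real.sq_sqrt ht'.le]
      field_simp
    exact h2.hasDerivWithinAt
  have hinj : Set.InjOn (fun t => a / Real.sqrt t) (Set.Ioi 0) := by
    intro t1 h1 t2 h2 h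
    have h1' : (0:ℝ) < t1 := h1
    have h2' : (0:ℝ) < t2 := h2
    have e1 : 0 < Real.sqrt t1 := Real.sqrt_pos.2 h1'
    have e2 : 0 < Real.sqrt t2 := Real.sqrt_pos.2 h2'
    simp only at h
    field_simp at h
    have h3 := congrArg (fun u => u ^ 2) h
    simp only [Real.sq_sqrt h1'.le, Real.sq_sqrt h2'.le] at h3
    linarith
  have hsub := MeasureTheory.integral_image_eq_integral_abs_deriv_smul measurableSet_Ioi
      hderiv hinj (fun u => Real.exp (-(1/2) * u ^ 2))
  rw [himg] at hsub
  have hgauss : ∫ u in Set.Ioi (0:ℝ), Real.exp (-(1/2) * u ^ 2) = Real.sqrt (2*Real.pi) / 2 := by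
    rw [integral_gaussian_Ioi]
    rw [show Real.pi / (1/2) = 2 * Real.pi by ring]
  rw [hgauss] at hsub
  have heq : ∀ t ∈ Set.Ioi (0:ℝ),
      |(-(a / (2 * t * Real.sqrt t)))| • Real.exp (-(1/2) * ((fun t => a / Real.sqrt t) t) ^ 2)
        = (1/2) * (a / (t * Real.sqrt t) * Real.exp (-(a^2/t)/2)) := by
    intro t ht
    have ht' : (0:ℝ) < t := ht
    have hst : 0 < Real.sqrt t := Real.sqrt_pos.2 ht'
    have hexp : -(1/2) * (a / Real.sqrt t) ^ 2 = -(a^2/t)/2 := by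
      rw [div_pow, Real.sq_sqrt ht'.le]
      ring
    simp only [smul_eq_mul, abs_neg, abs_of_pos (by positivity : 0 < a / (2 * t * Real.sqrt t)),
      hexp]
    ring
  rw [MeasureTheory.setIntegral_congr_fun measurableSet_Ioi heq] at hsub
  rw [MeasureTheory.integral_const_mul] at hsub
  linarith

lemma keypos (a b : ℝ) (ha : 0 < a) (hb : 0 < b) :
    ∫ t in Set.Ioi (0:ℝ), a / (t * Real.sqrt t) * Real.exp (-(a^2/t + b^2*t)/2)
      = Real.sqrt (2*Real.pi) * Real.exp (-(a*b)) := by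
  set E : ℝ → ℝ := fun t => Real.exp (-(a^2/t + b^2*t)/2) with hE
  set fI : ℝ → ℝ := fun t => a / (t * Real.sqrt t) * E t with hfI
  set fJ : ℝ → ℝ := fun t => b / Real.sqrt t * E t with hfJ
  -- step 1 : substitution u = a/√t - b√t
  set f : ℝ → ℝ := fun t => a / Real.sqrt t - b * Real.sqrt t with hf
  set f' : ℝ → ℝ := fun t => -(a / (2 * t * Real.sqrt t) + b / (2 * Real.sqrt t)) with hf'
  have hderiv : ∀ t ∈ Set.Ioi (0:ℝ), HasDerivWithinAt f (f' t) (Set.Ioi 0) t := by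
    intro t ht
    have ht' : (0:ℝ) < t := ht
    have hst : 0 < Real.sqrt t := Real.sqrt_pos.2 ht'
    have hs : HasDerivAt Real.sqrt (1 / (2 * Real.sqrt t)) t := Real.hasDerivAt_sqrt ht'.ne'
    have h1 : HasDerivAt (fun t => a / Real.sqrt t)
        (-(a * (1 / (2 * Real.sqrt t))) / (Real.sqrt t) ^ 2) t := by
      exact ((hasDerivAt_const t a).div hs hst.ne').congr_deriv (by ring)
    have h2 := hs.const_mul b
    have h3 : HasDerivAt f (f' t) t := by
      refine (h1.sub h2).congr_deriv ?_
      rw [hf', show (Real.sqrt t) ^ 2 = t from Real.sq_sqrt ht'.le]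
      field_simp
      ring
    exact h3.hasDerivWithinAt
  have hinj : Set.InjOn f (Set.Ioi 0) := by
    have hanti : StrictAntiOn f (Set.Ioi 0) := by
      intro s hs t ht hst
      have hs' : (0:ℝ) < s := hs
      have h1 : Real.sqrt s < Real.sqrt t := Real.sqrt_lt_sqrt hs'.le hst
      have hs0 : 0 < Real.sqrt s := Real.sqrt_pos.2 hs'
      have h2 : a / Real.sqrt t < a / Real.sqrt s := div_lt_div_of_pos_left ha hs0 h1
      have h3 : b * Real.sqrt s ≤ b * Real.sqrt t := by nlinarith
      simp only [hf]
      linarith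
    exact hanti.injOn
  have himg : f '' (Set.Ioi 0) = Set.univ := by
    apply Set.eq_univ_of_forall
    intro y
    set s : ℝ := (-y + Real.sqrt (y ^ 2 + 4 * b * a)) / (2 * b) with hs_def
    have hd : y ^ 2 < y ^ 2 + 4 * b * a := by nlinarith
    have hsq : |y| < Real.sqrt (y ^ 2 + 4 * b * a) := by
      rw [← Real.sqrt_sq_eq_abs]
      exact Real.sqrt_lt_sqrt (sq_nonneg y) hd
    have hs0 : 0 < s := by
      apply div_pos _ (by linarith)
      have := abs_lt.1 hsq
      linarith [this.1]
    refine ⟨s ^ 2, Set.mem_Ioi.2 (by positivity), ?_⟩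
    have hss : Real.sqrt (s ^ 2) = s := Real.sqrt_sq hs0.le
    simp only [hf, hss]
    have hroot : b * s ^ 2 + y * s - a = 0 := by
      have h2 : (2 * b * s + y) ^ 2 = y ^ 2 + 4 * b * a := by
        have : 2 * b * s + y = Real.sqrt (y ^ 2 + 4 * b * a) := by
          rw [hs_def]
          field_simp
          ring
        rw [this, Real.sq_sqrt (by positivity)]
      nlinarith
    field_simp
    nlinarith
  have hsub := MeasureTheory.integral_image_eq_integral_abs_deriv_smul measurableSet_Ioi
      hderiv hinj (fun u => Real.exp (-(1/2) * u ^ 2))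
  rw [himg] at hsub
  have hgauss : ∫ u in Set.univ, Real.exp (-(1/2) * u ^ 2) = Real.sqrt (2*Real.pi) := by
    rw [Measure.restrict_univ, integral_gaussian,
      show Real.pi / (1/2) = 2 * Real.pi by ring]
  rw [hgauss] at hsub
  -- pointwise identification of the substituted integrand
  have heq : ∀ t ∈ Set.Ioi (0:ℝ),
      |f' t| • Real.exp (-(1/2) * (f t) ^ 2)
        = Real.exp (a*b) * ((fI t + fJ t)/2) := by
    intro t ht
    have ht' : (0:ℝ) < t := ht
    have hst : 0 < Real.sqrt t := Real.sqrt_pos.2 ht'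
    have hsq : Real.sqrt t ^ 2 = t := Real.sq_sqrt ht'.le
    have hexp : -(1/2) * (f t) ^ 2 = a*b + (-(a^2/t + b^2*t)/2) := by
      simp only [hf]
      set s := Real.sqrt t with hs_def
      rw [show t = s ^ 2 from (Real.sq_sqrt ht'.le).symm]
      have hs0 : s ≠ 0 := hst.ne'
      field_simp
      ring
    have habs : |f' t| = a / (2 * t * Real.sqrt t) + b / (2 * Real.sqrt t) := by
      rw [hf']
      rw [abs_neg, abs_of_pos (by positivity)]
    rw [smul_eq_mul, habs, hexp, Real.exp_add]
    simp only [hfI, hfJ, hE]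
    ring
  rw [MeasureTheory.setIntegral_congr_fun measurableSet_Ioi heq] at hsub
  -- integrability
  have hintline : IntegrableOn (fun t => |f' t| • Real.exp (-(1/2) * (f t) ^ 2))
      (Set.Ioi 0) := by
    have h := (MeasureTheory.integrableOn_image_iff_integrableOn_abs_deriv_smul
      measurableSet_Ioi hderiv hinj (fun u => Real.exp (-(1/2) * u ^ 2))).1 ?_
    · exact h
    · rw [himg, MeasureTheory.integrableOn_univ]
      exact integrable_exp_neg_mul_sq (by norm_num : (0:ℝ) < 1/2)
  have hintsum : IntegrableOn (fun t => Real.exp (a*b) * ((fI t + fJ t)/2)) (Set.Ioi 0) :=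
    hintline.congr_fun heq measurableSet_Ioi
  have hcontE : ContinuousOn E (Set.Ioi 0) := by
    apply Real.continuous_exp.comp_continuousOn
    apply ContinuousOn.div _ continuousOn_const (fun t ht => two_ne_zero)
    apply ContinuousOn.neg
    apply ContinuousOn.add
    · exact continuousOn_const.div continuousOn_id (fun t ht => ne_of_gt ht)
    · exact continuousOn_const.mul continuousOn_id
  have hcontI : ContinuousOn fI (Set.Ioi 0) := by
    apply ContinuousOn.mul _ hcontE
    apply ContinuousOn.div continuousOn_const
    · exact continuousOn_id.mul Real.continuous_sqrt.continuousOn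
    · intro t ht
      have ht' : (0:ℝ) < t := ht
      positivity
  have hcontJ : ContinuousOn fJ (Set.Ioi 0) := by
    apply ContinuousOn.mul _ hcontE
    apply ContinuousOn.div continuousOn_const Real.continuous_sqrt.continuousOn
    intro t ht
    have ht' : (0:ℝ) < t := ht
    positivity
  have hnnI : ∀ t ∈ Set.Ioi (0:ℝ), 0 ≤ fI t := by
    intro t ht
    have ht' : (0:ℝ) < t := ht
    simp only [hfI, hE]
    positivity
  have hnnJ : ∀ t ∈ Set.Ioi (0:ℝ), 0 ≤ fJ t := by
    intro t ht
    have ht' : (0:ℝ) < t := ht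
    simp only [hfJ, hE]
    positivity
  have hintsum2 : IntegrableOn (fun t => fI t + fJ t) (Set.Ioi 0) := by
    have h := hintsum.const_mul (Real.exp (-(a*b)) * 2)
    apply MeasureTheory.IntegrableOn.congr_fun h _ measurableSet_Ioi
    intro t ht
    have hh : Real.exp (-(a*b)) * Real.exp (a*b) = 1 := by
      rw [← Real.exp_add]; norm_num
    simp only
    linear_combination (fI t + fJ t) * hh
  have hintI : IntegrableOn fI (Set.Ioi 0) := by
    apply Integrable.mono' hintsum2 (hcontI.aestronglyMeasurable measurableSet_Ioi)
    rw [MeasureTheory.ae_restrict_iff' measurableSet_Ioi]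
    filter_upwards with t ht
    rw [Real.norm_eq_abs, abs_of_nonneg (hnnI t ht)]
    have h1 := hnnJ t ht
    linarith
  have hintJ : IntegrableOn fJ (Set.Ioi 0) := by
    apply Integrable.mono' hintsum2 (hcontJ.aestronglyMeasurable measurableSet_Ioi)
    rw [MeasureTheory.ae_restrict_iff' measurableSet_Ioi]
    filter_upwards with t ht
    rw [Real.norm_eq_abs, abs_of_nonneg (hnnJ t ht)]
    have h1 := hnnI t ht
    linarith
  -- step 2 : J = I via t ↦ a²/(b²t)
  set c : ℝ := a^2 / b^2 with hc_def
  have hc : 0 < c := by positivity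
  have hinvimg : (fun t => c / t) '' (Set.Ioi 0) = Set.Ioi 0 := by
    ext y
    constructor
    · rintro ⟨t, ht, rfl⟩
      exact div_pos hc ht
    · intro hy
      have hy' : (0:ℝ) < y := hy
      exact ⟨c / y, div_pos hc hy', by field_simp⟩
  have hinvderiv : ∀ t ∈ Set.Ioi (0:ℝ), HasDerivWithinAt (fun t => c / t)
      (-(c / t^2)) (Set.Ioi 0) t := by
    intro t ht
    have ht' : (0:ℝ) < t := ht
    have h0 := ((hasDerivAt_inv ht'.ne').const_mul c)
    have h2 : HasDerivAt (fun t => c / t) (-(c / t^2)) t := by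
      simp only [div_eq_mul_inv]
      exact h0.congr_deriv (by ring)
    exact h2.hasDerivWithinAt
  have hinvinj : Set.InjOn (fun t => c / t) (Set.Ioi 0) := by
    intro t1 h1 t2 h2 h
    have h1' : (0:ℝ) < t1 := h1
    have h2' : (0:ℝ) < t2 := h2
    simp only at h
    field_simp at h
    linarith
  have hIJ : ∫ t in Set.Ioi (0:ℝ), fI t = ∫ t in Set.Ioi (0:ℝ), fJ t := by
    have hsub2 := MeasureTheory.integral_image_eq_integral_abs_deriv_smul measurableSet_Ioi
        hinvderiv hinvinj fI
    rw [hinvimg] at hsub2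
    rw [hsub2]
    apply MeasureTheory.setIntegral_congr_fun measurableSet_Ioi
    intro t ht
    have ht' : (0:ℝ) < t := ht
    have hst : 0 < Real.sqrt t := Real.sqrt_pos.2 ht'
    have hsq : Real.sqrt t ^ 2 = t := Real.sq_sqrt ht'.le
    have hct : 0 < c / t := div_pos hc ht'
    have hsqct : Real.sqrt (c / t) = (a / b) / Real.sqrt t := by
      rw [show c / t = (a/b)^2 / t by rw [hc_def]; ring, Real.sqrt_div (by positivity) t,
        Real.sqrt_sq (by positivity)]
    have hexpeq : -(a^2/(c/t) + b^2*(c/t))/2 = -(a^2/t + b^2*t)/2 := by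
      rw [hc_def]
      field_simp
      ring
    simp only [smul_eq_mul, hfI, hfJ, hE, hsqct, hexpeq, abs_neg,
      abs_of_pos (show 0 < c / t^2 by positivity)]
    rw [hc_def]
    set s := Real.sqrt t with hs_def
    rw [show t = s ^ 2 from (Real.sq_sqrt ht'.le).symm]
    have hs0 : s ≠ 0 := hst.ne'
    have hab : a ≠ 0 := ha.ne'
    have hbb : b ≠ 0 := hb.ne'
    field_simp
  -- conclude
  rw [MeasureTheory.integral_const_mul, MeasureTheory.integral_div,
    MeasureTheory.integral_add hintI hintJ, ← hIJ] at hsub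
  have h2pi : (0:ℝ) < Real.sqrt (2 * Real.pi) := by positivity
  have hexppos : (0:ℝ) < Real.exp (a*b) := Real.exp_pos _
  have : ∫ t in Set.Ioi (0:ℝ), fI t = Real.sqrt (2*Real.pi) / Real.exp (a*b) := by
    field_simp at hsub ⊢
    linarith
  rw [hfI] at this
  simp only [hE] at this
  rw [this, Real.exp_neg, div_eq_mul_inv]

lemma key_all (a b : ℝ) (ha : 0 < a) (hb : 0 ≤ b) :
    ∫ t in Set.Ioi (0:ℝ), a / (t * Real.sqrt t) * Real.exp (-(a^2/t + b^2*t)/2)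
      = Real.sqrt (2*Real.pi) * Real.exp (-(a*b)) := by
  rcases eq_or_lt_of_le hb with rfl | hb'
  · rw [MeasureTheory.setIntegral_congr_fun measurableSet_Ioi
      (fun t ht => by norm_num : ∀ t ∈ Set.Ioi (0:ℝ),
        a / (t * Real.sqrt t) * Real.exp (-(a^2/t + (0:ℝ)^2*t)/2)
          = a / (t * Real.sqrt t) * Real.exp (-(a^2/t)/2)), key0 a ha]
    simp
  · exact keypos a b ha hb'

/-- The inverse Gaussian first-passage density integrates to one:
`∫_0^∞ (x/√(2π r³)) exp(−(x − μ r)²/(2r)) dr = 1` for `x > 0`, `μ ≥ 0`. -/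
theorem inverse_gaussian_density_integral (x μ : ℝ) (hx : 0 < x) (hμ : 0 ≤ μ) :
    ∫ r in Set.Ioi (0 : ℝ),
      x / Real.sqrt (2 * Real.pi * r ^ 3) * Real.exp (-(x - μ * r) ^ 2 / (2 * r)) = 1 := by
  have hcong : ∀ r ∈ Set.Ioi (0:ℝ),
      x / Real.sqrt (2 * Real.pi * r ^ 3) * Real.exp (-(x - μ * r) ^ 2 / (2 * r))
        = (Real.exp (μ*x) / Real.sqrt (2*Real.pi)) *
            (x / (r * Real.sqrt r) * Real.exp (-(x^2/r + μ^2*r)/2)) := by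
    intro r hr
    have hr' : (0:ℝ) < r := hr
    have h3 : Real.sqrt (r^3) = r * Real.sqrt r := by
      rw [show r^3 = r^2 * r by ring, Real.sqrt_mul (sq_nonneg r), Real.sqrt_sq hr'.le]
    have hexp : -(x - μ*r)^2/(2*r) = μ*x + (-(x^2/r + μ^2*r)/2) := by
      field_simp
      ring
    rw [show 2 * Real.pi * r ^ 3 = (2 * Real.pi) * r ^ 3 by ring,
      Real.sqrt_mul (by positivity) (r^3), h3, hexp, Real.exp_add]
    ring
  rw [MeasureTheory.setIntegral_congr_fun measurableSet_Ioi hcong,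
    MeasureTheory.integral_const_mul, key_all x μ hx hμ]
  have h2pi : (0:ℝ) < Real.sqrt (2 * Real.pi) := by positivity
  rw [div_mul_eq_mul_div, mul_comm]
  field_simp
  rw [← Real.exp_add]
  simp [mul_comm]
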